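/- Define the pre-metric δ(A,B) = tr((A/det(A)^{1/d})·(B⁻¹/det(B⁻¹)^{1/d})) − d on symmetric positive definite d×d matrices. Then δ(A,B) ≥ 0 for all such A, B, δ(A,A) = 0, and δ(A,B) = 0 if and only if A is a positive scalar multiple of B. -/

import Mathlib

open Matrix

noncomputable def preMetricDelta (d : ℕ) (A B : Matrix (Fin d) (Fin d) ℝ) : ℝ :=
  (((A.det ^ ((1:ℝ)/d))⁻¹ • A) * (((B⁻¹).det ^ ((1:ℝ)/d))⁻¹ • B⁻¹)).trace - d

lemma traceSum' {n : Type*} [Fintype n] [DecidableEq n] {A : Matrix n n ℝ} (hA : A.IsHermitian) :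
    A.trace = ∑ i, hA.eigenvalues i := by
  conv_lhs => rw [hA.spectral_theorem]
  rw [Unitary.conjStarAlgAut_apply, trace_mul_cycle, Unitary.coe_star_mul_self]
  simp [trace_diagonal]

lemma keyLemma' {d : ℕ} {M : Matrix (Fin d) (Fin d) ℝ} (hM : M.PosDef) (hdet : M.det = 1) :
    (d : ℝ) ≤ M.trace ∧ (M.trace = (d : ℝ) → M = 1) := by
  have hev : ∀ i, 0 < hM.1.eigenvalues i := hM.eigenvalues_pos
  have hprod : ∏ i, hM.1.eigenvalues i = 1 := by
    have := hM.1.det_eq_prod_eigenvalues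
    rw [hdet] at this
    exact_mod_cast this.symm
  have hlog : ∑ i, Real.log (hM.1.eigenvalues i) = 0 := by
    rw [← Real.log_prod (fun i _ => (hev i).ne'), hprod, Real.log_one]
  have htr : M.trace = ∑ i, hM.1.eigenvalues i := traceSum' hM.1
  have hterm : ∀ i, 0 ≤ hM.1.eigenvalues i - 1 - Real.log (hM.1.eigenvalues i) := by
    intro i
    have := Real.log_le_sub_one_of_pos (hev i)
    linarith
  have hsum : M.trace - d = ∑ i, (hM.1.eigenvalues i - 1 - Real.log (hM.1.eigenvalues i)) := by
    rw [htr]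
    simp [Finset.sum_sub_distrib, hlog, Finset.card_univ]
  constructor
  · have : 0 ≤ ∑ i, (hM.1.eigenvalues i - 1 - Real.log (hM.1.eigenvalues i)) :=
      Finset.sum_nonneg fun i _ => hterm i
    linarith [hsum]
  · intro h
    have h0 : ∑ i, (hM.1.eigenvalues i - 1 - Real.log (hM.1.eigenvalues i)) = 0 := by
      rw [← hsum, h]; ring
    have hall : ∀ i, hM.1.eigenvalues i = 1 := by
      intro i
      by_contra hne
      have hstrict := Real.log_lt_sub_one_of_pos (hev i) hne
      have : 0 < ∑ i, (hM.1.eigenvalues i - 1 - Real.log (hM.1.eigenvalues i)) :=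
        Finset.sum_pos' (fun j _ => hterm j) ⟨i, Finset.mem_univ i, by linarith⟩
      linarith
    have hsp := hM.1.spectral_theorem
    rw [hsp]
    have hdiag : Matrix.diagonal (RCLike.ofReal ∘ hM.1.eigenvalues)
        = (1 : Matrix (Fin d) (Fin d) ℝ) := by
      rw [← Matrix.diagonal_one]
      ext i j
      rcases eq_or_ne i j with rfl|h
      · simp [hall]
      · simp [Matrix.diagonal_apply_ne _ h, Matrix.one_apply_ne h]
    rw [hdiag, map_one]

lemma posDef_smul' {n : Type*} [Fintype n] {c : ℝ} (hc : 0 < c)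
    {M : Matrix n n ℝ} (hM : M.PosDef) : (c • M).PosDef := by
  refine posDef_iff_dotProduct_mulVec.mpr ⟨?_, ?_⟩
  · unfold Matrix.IsHermitian
    rw [conjTranspose_smul, hM.1.eq]
    norm_num
  · intro x hx
    rw [smul_mulVec, dotProduct_smul, smul_eq_mul]
    exact mul_pos hc (hM.dotProduct_mulVec_pos hx)

lemma posDef_conj' {n : Type*} [Fintype n] [DecidableEq n]
    {A P : Matrix n n ℝ} (hA : A.PosDef) (hP : P.IsHermitian) (hPdet : IsUnit P.det) :
    (P * A * P).PosDef := by
  have hPu : IsUnit P := (Matrix.isUnit_iff_isUnit_det P).mpr hPdet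
  refine posDef_iff_dotProduct_mulVec.mpr ⟨?_, ?_⟩
  · have := isHermitian_conjTranspose_mul_mul P hA.1
    rwa [hP.eq] at this
  · intro x hx
    have hPx : P *ᵥ x ≠ 0 := by
      intro h0
      apply hx
      have hinj := Matrix.mulVec_injective_iff_isUnit.mpr hPu
      apply hinj
      rw [h0, Matrix.mulVec_zero]
    have e : P * A * P = Pᴴ * A * P := by rw [hP.eq]
    rw [e]
    simpa only [star_mulVec, dotProduct_mulVec, vecMul_vecMul] using hA.dotProduct_mulVec_pos hPx

lemma pow_inj_pos' {d : ℕ} (hd : d ≠ 0) {x y : ℝ} (hx : 0 < x) (hy : 0 < y)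
    (h : x ^ d = y ^ d) : x = y := by
  rcases lt_trichotomy x y with hlt | he | hgt
  · exact absurd h (ne_of_lt (pow_lt_pow_left₀ hlt hx.le hd))
  · exact he
  · exact absurd h.symm (ne_of_lt (pow_lt_pow_left₀ hgt hy.le hd))

lemma delta_eq' (d : ℕ) (A B : Matrix (Fin d) (Fin d) ℝ) :
    preMetricDelta d A B
      = ((A.det ^ ((1:ℝ)/d)) * ((B⁻¹).det ^ ((1:ℝ)/d)))⁻¹ * (A * B⁻¹).trace - d := by
  unfold preMetricDelta
  rw [Matrix.smul_mul, Matrix.mul_smul, smul_smul, trace_smul, smul_eq_mul, mul_inv]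

lemma delta_zero_of_smul' {d : ℕ} (hd : 1 ≤ d) {A B : Matrix (Fin d) (Fin d) ℝ}
    (hB : B.PosDef) {c : ℝ} (hc : 0 < c) (hAB : A = c • B) :
    preMetricDelta d A B = 0 := by
  have hd0 : (d : ℝ) ≠ 0 := Nat.cast_ne_zero.mpr (by omega)
  have hdn : d ≠ 0 := by omega
  have hBdet : B.det ≠ 0 := hB.det_pos.ne'
  set a : ℝ := A.det ^ ((1:ℝ)/d) with ha_def
  set b : ℝ := (B⁻¹).det ^ ((1:ℝ)/d) with hb_def
  have hA : A.PosDef := hAB ▸ posDef_smul' hc hB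
  have hBi : (B⁻¹).PosDef := hB.inv
  have ha : 0 < a := Real.rpow_pos_of_pos hA.det_pos _
  have hb : 0 < b := Real.rpow_pos_of_pos hBi.det_pos _
  have had : a ^ d = A.det := by
    rw [ha_def, ← Real.rpow_natCast (A.det ^ ((1:ℝ)/d)) d, ← Real.rpow_mul hA.det_pos.le,
      one_div, inv_mul_cancel₀ hd0, Real.rpow_one]
  have hbd : b ^ d = (B⁻¹).det := by
    rw [hb_def, ← Real.rpow_natCast ((B⁻¹).det ^ ((1:ℝ)/d)) d, ← Real.rpow_mul hBi.det_pos.le,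
      one_div, inv_mul_cancel₀ hd0, Real.rpow_one]
  have hABi : A * B⁻¹ = c • (1 : Matrix (Fin d) (Fin d) ℝ) := by
    rw [hAB, Matrix.smul_mul, Matrix.mul_nonsing_inv B (isUnit_iff_ne_zero.mpr hBdet)]
  have habc : a * b = c := by
    apply pow_inj_pos' hdn (mul_pos ha hb) hc
    rw [mul_pow, had, hbd, ← Matrix.det_mul, hABi, Matrix.det_smul, Matrix.det_one,
      Fintype.card_fin, mul_one]
  have htr : (A * B⁻¹).trace = c * d := by
    rw [hABi, trace_smul, trace_one, smul_eq_mul, Fintype.card_fin]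
  rw [delta_eq', ← ha_def, ← hb_def, habc, htr]
  field_simp
  ring

theorem preMetricDelta_properties (d : ℕ) (hd : 1 ≤ d) :
    (∀ A B : Matrix (Fin d) (Fin d) ℝ, A.PosDef → B.PosDef →
      0 ≤ preMetricDelta d A B) ∧
    (∀ A : Matrix (Fin d) (Fin d) ℝ, A.PosDef → preMetricDelta d A A = 0) ∧
    (∀ A B : Matrix (Fin d) (Fin d) ℝ, A.PosDef → B.PosDef →
      (preMetricDelta d A B = 0 ↔ ∃ c : ℝ, 0 < c ∧ A = c • B)) := by
  have hd0 : (d : ℝ) ≠ 0 := Nat.cast_ne_zero.mpr (by omega)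
  -- main construction
  have main : ∀ A B : Matrix (Fin d) (Fin d) ℝ, A.PosDef → B.PosDef →
      0 ≤ preMetricDelta d A B ∧
      (preMetricDelta d A B = 0 → ∃ c : ℝ, 0 < c ∧ A = c • B) := by
    intro A B hA hB
    have hBi : (B⁻¹).PosDef := hB.inv
    set a : ℝ := A.det ^ ((1:ℝ)/d) with ha_def
    set b : ℝ := (B⁻¹).det ^ ((1:ℝ)/d) with hb_def
    have ha : 0 < a := Real.rpow_pos_of_pos hA.det_pos _
    have hb : 0 < b := Real.rpow_pos_of_pos hBi.det_pos _
    have had : a ^ d = A.det := by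
      rw [ha_def, ← Real.rpow_natCast (A.det ^ ((1:ℝ)/d)) d, ← Real.rpow_mul hA.det_pos.le,
        one_div, inv_mul_cancel₀ hd0, Real.rpow_one]
    have hbd : b ^ d = (B⁻¹).det := by
      rw [hb_def, ← Real.rpow_natCast ((B⁻¹).det ^ ((1:ℝ)/d)) d, ← Real.rpow_mul hBi.det_pos.le,
        one_div, inv_mul_cancel₀ hd0, Real.rpow_one]
    open scoped MatrixOrder in set P : Matrix (Fin d) (Fin d) ℝ := CFC.sqrt (B⁻¹) with hP_def
    open scoped MatrixOrder in have hPsd : P.PosSemidef := (CFC.sqrt_nonneg (B⁻¹)).posSemidef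
    open scoped MatrixOrder in have hPP : P * P = B⁻¹ := CFC.sqrt_mul_sqrt_self _ hBi.posSemidef.nonneg
    have hPdet2 : P.det * P.det = (B⁻¹).det := by rw [← Matrix.det_mul, hPP]
    have hPdet : IsUnit P.det := by
      refine isUnit_iff_ne_zero.mpr ?_
      intro h0
      rw [h0, zero_mul] at hPdet2
      exact hBi.det_pos.ne' hPdet2.symm
    have hPAP : (P * A * P).PosDef := posDef_conj' hA hPsd.1 hPdet
    have hab : 0 < a * b := mul_pos ha hb
    set M : Matrix (Fin d) (Fin d) ℝ := (a * b)⁻¹ • (P * A * P) with hM_def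
    have hMpd : M.PosDef := posDef_smul' (inv_pos.mpr hab) hPAP
    have hMdet : M.det = 1 := by
      rw [hM_def, Matrix.det_smul, Fintype.card_fin, Matrix.det_mul, Matrix.det_mul]
      have e : P.det * A.det * P.det = a ^ d * b ^ d := by
        rw [had, hbd, ← hPdet2]; ring
      rw [e, inv_pow, ← mul_pow, inv_mul_cancel₀ (pow_ne_zero d hab.ne')]
    have hMtr : M.trace = (a * b)⁻¹ * (A * B⁻¹).trace := by
      rw [hM_def, trace_smul, smul_eq_mul]
      congr 1
      rw [trace_mul_cycle, hPP, trace_mul_comm]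
    have hdelta : preMetricDelta d A B = M.trace - d := by
      rw [delta_eq', ← ha_def, ← hb_def, hMtr]
    obtain ⟨hge, heq⟩ := keyLemma' hMpd hMdet
    constructor
    · rw [hdelta]; linarith
    · intro h0
      have hM1 : M = 1 := heq (by rw [hdelta] at h0; linarith)
      refine ⟨a * b, hab, ?_⟩
      have hE : P * A * P = (a * b) • (1 : Matrix (Fin d) (Fin d) ℝ) := by
        calc P * A * P = (a * b) • ((a * b)⁻¹ • (P * A * P)) := by
              rw [smul_smul, mul_inv_cancel₀ hab.ne', one_smul]
          _ = (a * b) • (1 : Matrix (Fin d) (Fin d) ℝ) := by rw [← hM_def, hM1]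
      haveI : Invertible P := P.invertibleOfIsUnitDet hPdet
      have e1 : A = P⁻¹ * (P * A * P) * P⁻¹ := by
        rw [show P⁻¹ * (P * A * P) * P⁻¹ = (P⁻¹ * P) * A * (P * P⁻¹) by
          simp only [Matrix.mul_assoc],
          Matrix.inv_mul_of_invertible, Matrix.mul_inv_of_invertible, Matrix.one_mul,
          Matrix.mul_one]
      rw [e1, hE, Matrix.mul_smul, Matrix.smul_mul, Matrix.mul_one, ← Matrix.mul_inv_rev,
        hPP, Matrix.nonsing_inv_nonsing_inv B (isUnit_iff_ne_zero.mpr hB.det_pos.ne')]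
  refine ⟨fun A B hA hB => (main A B hA hB).1, ?_, ?_⟩
  · intro A hA
    exact delta_zero_of_smul' hd hA (c := 1) one_pos (one_smul ℝ A).symm
  · intro A B hA hB
    constructor
    · exact (main A B hA hB).2
    · rintro ⟨c, hc, hAB⟩
      exact delta_zero_of_smul' hd hB hc hAB
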